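/- There exists a unique antiautomorphism † of the 𝔽-algebra U_q(𝔰𝔩₂) (an 𝔽-linear bijection with †(uv) = †(v)†(u) for all u, v) that fixes each of A, y, y⁻¹; this antiautomorphism sends x ↦ Z, y^{±1} ↦ y^{±1}, z ↦ X, and satisfies †² = 1. -/

import Mathlib

namespace Paper


/-- Generators for the equitable presentation of `U_q(sl2)`: `x`, `y`, `y⁻¹`, `z`. -/
inductive EqGen : Type
  | x | y | y' | z

/-- The defining relations of the equitable presentation of `U_q(sl2)`. -/
inductive EqRel (F : Type*) [Field F] (q : F) :
    FreeAlgebra F EqGen → FreeAlgebra F EqGen → Prop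
  | yy' : EqRel F q (FreeAlgebra.ι F EqGen.y * FreeAlgebra.ι F EqGen.y') 1
  | y'y : EqRel F q (FreeAlgebra.ι F EqGen.y' * FreeAlgebra.ι F EqGen.y) 1
  | xy : EqRel F q
      (q • (FreeAlgebra.ι F EqGen.x * FreeAlgebra.ι F EqGen.y)
        - q⁻¹ • (FreeAlgebra.ι F EqGen.y * FreeAlgebra.ι F EqGen.x))
      ((q - q⁻¹) • (1 : FreeAlgebra F EqGen))
  | yz : EqRel F q
      (q • (FreeAlgebra.ι F EqGen.y * FreeAlgebra.ι F EqGen.z)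
        - q⁻¹ • (FreeAlgebra.ι F EqGen.z * FreeAlgebra.ι F EqGen.y))
      ((q - q⁻¹) • (1 : FreeAlgebra F EqGen))
  | zx : EqRel F q
      (q • (FreeAlgebra.ι F EqGen.z * FreeAlgebra.ι F EqGen.x)
        - q⁻¹ • (FreeAlgebra.ι F EqGen.x * FreeAlgebra.ι F EqGen.z))
      ((q - q⁻¹) • (1 : FreeAlgebra F EqGen))

/-- `U_q(sl2)` in its equitable presentation. -/
abbrev Usl2 (F : Type*) [Field F] (q : F) := RingQuot (EqRel F q)

noncomputable def ux (F : Type*) [Field F] (q : F) : Usl2 F q :=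
  RingQuot.mkAlgHom F (EqRel F q) (FreeAlgebra.ι F EqGen.x)

noncomputable def uy (F : Type*) [Field F] (q : F) : Usl2 F q :=
  RingQuot.mkAlgHom F (EqRel F q) (FreeAlgebra.ι F EqGen.y)

noncomputable def uy' (F : Type*) [Field F] (q : F) : Usl2 F q :=
  RingQuot.mkAlgHom F (EqRel F q) (FreeAlgebra.ι F EqGen.y')

noncomputable def uz (F : Type*) [Field F] (q : F) : Usl2 F q :=
  RingQuot.mkAlgHom F (EqRel F q) (FreeAlgebra.ι F EqGen.z)

/-- `X = a⁻²x + (1 − a⁻²)y⁻¹`. -/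
noncomputable def uX (F : Type*) [Field F] (q a : F) : Usl2 F q :=
  (a ^ 2)⁻¹ • ux F q + (1 - (a ^ 2)⁻¹) • uy' F q

/-- `Z = a²z + (1 − a²)y⁻¹`. -/
noncomputable def uZ (F : Type*) [Field F] (q a : F) : Usl2 F q :=
  a ^ 2 • uz F q + (1 - a ^ 2) • uy' F q

/-- `A = a⁻¹x + az`. -/
noncomputable def uA (F : Type*) [Field F] (q a : F) : Usl2 F q :=
  a⁻¹ • ux F q + a • uz F q

/-- `U_q^∨`, the subalgebra of `U_q(sl2)` generated by `x`, `y⁻¹`, `z`. -/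
noncomputable def Uvee (F : Type*) [Field F] (q : F) : Subalgebra F (Usl2 F q) :=
  Algebra.adjoin F {ux F q, uy' F q, uz F q}


section Lemmas

variable (F : Type*) [Field F] (q a : F)

lemma ryy' : uy F q * uy' F q = 1 := by
  have h := RingQuot.mkAlgHom_rel F (EqRel.yy' (F := F) (q := q))
  rw [map_mul, map_one] at h
  exact h

lemma ry'y : uy' F q * uy F q = 1 := by
  have h := RingQuot.mkAlgHom_rel F (EqRel.y'y (F := F) (q := q))
  rw [map_mul, map_one] at h
  exact h

lemma cyy' (u : Usl2 F q) : uy F q * (uy' F q * u) = u := by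
  rw [← mul_assoc, ryy', one_mul]

lemma cy'y (u : Usl2 F q) : uy' F q * (uy F q * u) = u := by
  rw [← mul_assoc, ry'y, one_mul]

lemma rxy : q • (ux F q * uy F q) - q⁻¹ • (uy F q * ux F q)
    = (q - q⁻¹) • (1 : Usl2 F q) := by
  have h := RingQuot.mkAlgHom_rel F (EqRel.xy (F := F) (q := q))
  rw [map_sub, map_smul, map_smul, map_smul, map_mul, map_mul, map_one] at h
  exact h

lemma ryz : q • (uy F q * uz F q) - q⁻¹ • (uz F q * uy F q)
    = (q - q⁻¹) • (1 : Usl2 F q) := by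
  have h := RingQuot.mkAlgHom_rel F (EqRel.yz (F := F) (q := q))
  rw [map_sub, map_smul, map_smul, map_smul, map_mul, map_mul, map_one] at h
  exact h

lemma rzx : q • (uz F q * ux F q) - q⁻¹ • (ux F q * uz F q)
    = (q - q⁻¹) • (1 : Usl2 F q) := by
  have h := RingQuot.mkAlgHom_rel F (EqRel.zx (F := F) (q := q))
  rw [map_sub, map_smul, map_smul, map_smul, map_mul, map_mul, map_one] at h
  exact h

lemma ryy'2 : q • (uy F q * uy' F q) - q⁻¹ • (uy' F q * uy F q)
    = (q - q⁻¹) • (1 : Usl2 F q) := by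
  rw [ryy', ry'y]; module

lemma ry'y2 : q • (uy' F q * uy F q) - q⁻¹ • (uy F q * uy' F q)
    = (q - q⁻¹) • (1 : Usl2 F q) := by
  rw [ryy', ry'y]; module

/-- `uy' * (rel yz) * uy'` conjugation. -/
lemma rC1 : q • (uz F q * uy' F q) - q⁻¹ • (uy' F q * uz F q)
    = (q - q⁻¹) • (uy' F q * uy' F q) := by
  have h := congrArg (fun w => uy' F q * w * uy' F q) (ryz F q)
  simp only [mul_sub, sub_mul, mul_smul_comm, smul_mul_assoc, mul_one, mul_assoc,
    cy'y, ryy', cyy'] at h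
  simpa only [ryy', mul_one] using h

lemma rC2 : q • (uy' F q * ux F q) - q⁻¹ • (ux F q * uy' F q)
    = (q - q⁻¹) • (uy' F q * uy' F q) := by
  have h := congrArg (fun w => uy' F q * w * uy' F q) (rxy F q)
  simp only [mul_sub, sub_mul, mul_smul_comm, smul_mul_assoc, mul_one, mul_assoc,
    cy'y, ryy', cyy'] at h
  simpa only [ryy', mul_one] using h

lemma rD1 : q • (uy F q * uZ F q a) - q⁻¹ • (uZ F q a * uy F q)
    = (q - q⁻¹) • (1 : Usl2 F q) := by
  rw [uZ]
  simp only [mul_add, add_mul, mul_smul_comm, smul_mul_assoc]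
  linear_combination (norm := module) (a ^ 2 : F) • ryz F q + (1 - a ^ 2 : F) • ryy'2 F q

lemma rD2 : q • (uX F q a * uy F q) - q⁻¹ • (uy F q * uX F q a)
    = (q - q⁻¹) • (1 : Usl2 F q) := by
  rw [uX]
  simp only [mul_add, add_mul, mul_smul_comm, smul_mul_assoc]
  linear_combination (norm := module) ((a ^ 2)⁻¹ : F) • rxy F q
    + (1 - (a ^ 2)⁻¹ : F) • ry'y2 F q

lemma rD3 (ha0 : a ≠ 0) : q • (uZ F q a * uX F q a) - q⁻¹ • (uX F q a * uZ F q a)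
    = (q - q⁻¹) • (1 : Usl2 F q) := by
  have ha2 : (a : F) ^ 2 ≠ 0 := pow_ne_zero 2 ha0
  rw [uX, uZ]
  simp only [mul_add, add_mul, mul_smul_comm, smul_mul_assoc, smul_smul]
  linear_combination (norm := (match_scalars <;> (first | ring1 | linear_combination (q - q⁻¹) * mul_inv_cancel₀ ha2 | linear_combination (q⁻¹ - q) * mul_inv_cancel₀ ha2)))
    (a ^ 2 * (a ^ 2)⁻¹ : F) • rzx F q + (a ^ 2 * (1 - (a ^ 2)⁻¹) : F) • rC1 F q
    + ((1 - a ^ 2) * (a ^ 2)⁻¹ : F) • rC2 F q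

lemma rAB (ha0 : a ≠ 0) : uA F q a = a • uX F q a + a⁻¹ • uZ F q a := by
  have ha2 : (a : F) ^ 2 ≠ 0 := pow_ne_zero 2 ha0
  rw [uA, uX, uZ]
  match_scalars <;> field_simp <;> ring1

lemma rIX (ha0 : a ≠ 0) : a ^ 2 • uX F q a + (1 - a ^ 2) • uy' F q = ux F q := by
  have ha2 : (a : F) ^ 2 ≠ 0 := pow_ne_zero 2 ha0
  rw [uX]
  match_scalars <;> field_simp <;> ring1

lemma rIZ (ha0 : a ≠ 0) :
    (a ^ 2)⁻¹ • uZ F q a + (1 - (a ^ 2)⁻¹) • uy' F q = uz F q := by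
  have ha2 : (a : F) ^ 2 ≠ 0 := pow_ne_zero 2 ha0
  rw [uZ]
  match_scalars <;> field_simp <;> ring1

/-- Induction principle for `Usl2`. -/
lemma usl2_induction {P : Usl2 F q → Prop}
    (halg : ∀ c : F, P (algebraMap F (Usl2 F q) c))
    (hx : P (ux F q)) (hy : P (uy F q)) (hy' : P (uy' F q)) (hz : P (uz F q))
    (hadd : ∀ u v, P u → P v → P (u + v))
    (hmul : ∀ u v, P u → P v → P (u * v)) :
    ∀ u, P u := by
  intro u
  obtain ⟨v, rfl⟩ := RingQuot.mkAlgHom_surjective F (EqRel F q) u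
  induction v using FreeAlgebra.induction with
  | grade0 r => rw [AlgHom.commutes]; exact halg r
  | grade1 g => cases g
                · exact hx
                · exact hy
                · exact hy'
                · exact hz
  | mul u v hu hv => rw [map_mul]; exact hmul _ _ hu hv
  | add u v hu hv => rw [map_add]; exact hadd _ _ hu hv

/-- The antiautomorphism, as an algebra map to the opposite algebra. -/
noncomputable def dagAux (ha0 : a ≠ 0) : Usl2 F q →ₐ[F] (Usl2 F q)ᵐᵒᵖ :=
  RingQuot.liftAlgHom F
    ⟨FreeAlgebra.lift F fun g => MulOpposite.op (match g with
      | EqGen.x => uZ F q a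
      | EqGen.y => uy F q
      | EqGen.y' => uy' F q
      | EqGen.z => uX F q a), by
    intro u v h
    cases h <;>
      simp only [map_sub, map_smul, map_mul, map_one, FreeAlgebra.lift_ι_apply] <;>
      rw [show (1 : (Usl2 F q)ᵐᵒᵖ) = MulOpposite.op 1 from rfl] <;>
      simp only [← MulOpposite.op_mul, ← MulOpposite.op_smul, ← MulOpposite.op_sub]
    · exact congrArg MulOpposite.op (ry'y F q)
    · exact congrArg MulOpposite.op (ryy' F q)
    · exact congrArg MulOpposite.op (rD1 F q a)
    · exact congrArg MulOpposite.op (rD2 F q a)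
    · exact congrArg MulOpposite.op (rD3 F q a ha0)⟩

/-- The antiautomorphism `†` as a linear map. -/
noncomputable def dag (ha0 : a ≠ 0) : Usl2 F q →ₗ[F] Usl2 F q :=
  (MulOpposite.opLinearEquiv F).symm.toLinearMap ∘ₗ (dagAux F q a ha0).toLinearMap

variable {ha0 : a ≠ 0}

lemma dag_apply (ha0 : a ≠ 0) (u : Usl2 F q) :
    dag F q a ha0 u = (dagAux F q a ha0 u).unop := rfl

lemma dag_mul (ha0 : a ≠ 0) (u v : Usl2 F q) :
    dag F q a ha0 (u * v) = dag F q a ha0 v * dag F q a ha0 u := by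
  simp only [dag_apply, map_mul, MulOpposite.unop_mul]

lemma dag_algebraMap (ha0 : a ≠ 0) (c : F) :
    dag F q a ha0 (algebraMap F (Usl2 F q) c) = algebraMap F (Usl2 F q) c := by
  rw [dag_apply, AlgHom.commutes, MulOpposite.algebraMap_apply, MulOpposite.unop_op]

lemma dag_x (ha0 : a ≠ 0) : dag F q a ha0 (ux F q) = uZ F q a := by
  rw [dag_apply, ux, dagAux, RingQuot.liftAlgHom_mkAlgHom_apply, FreeAlgebra.lift_ι_apply,
    MulOpposite.unop_op]

lemma dag_y (ha0 : a ≠ 0) : dag F q a ha0 (uy F q) = uy F q := by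
  rw [dag_apply, uy, dagAux, RingQuot.liftAlgHom_mkAlgHom_apply, FreeAlgebra.lift_ι_apply,
    MulOpposite.unop_op]
  rfl

lemma dag_y' (ha0 : a ≠ 0) : dag F q a ha0 (uy' F q) = uy' F q := by
  rw [dag_apply, uy', dagAux, RingQuot.liftAlgHom_mkAlgHom_apply, FreeAlgebra.lift_ι_apply,
    MulOpposite.unop_op]
  rfl

lemma dag_z (ha0 : a ≠ 0) : dag F q a ha0 (uz F q) = uX F q a := by
  rw [dag_apply, uz, dagAux, RingQuot.liftAlgHom_mkAlgHom_apply, FreeAlgebra.lift_ι_apply,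
    MulOpposite.unop_op]

lemma dag_Z (ha0 : a ≠ 0) : dag F q a ha0 (uZ F q a) = ux F q := by
  rw [uZ, map_add, map_smul, map_smul, dag_z, dag_y']
  exact rIX F q a ha0

lemma dag_X (ha0 : a ≠ 0) : dag F q a ha0 (uX F q a) = uz F q := by
  rw [uX, map_add, map_smul, map_smul, dag_x, dag_y']
  exact rIZ F q a ha0

lemma dag_A (ha0 : a ≠ 0) : dag F q a ha0 (uA F q a) = uA F q a := by
  rw [uA, map_add, map_smul, map_smul, dag_x, dag_z, ← uA, rAB F q a ha0]
  exact add_comm _ _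

lemma dag_dag (ha0 : a ≠ 0) : ∀ u : Usl2 F q,
    dag F q a ha0 (dag F q a ha0 u) = u := by
  refine usl2_induction F q ?_ ?_ ?_ ?_ ?_ ?_ ?_
  · intro c; rw [dag_algebraMap, dag_algebraMap]
  · rw [dag_x, dag_Z]
  · rw [dag_y, dag_y]
  · rw [dag_y', dag_y']
  · rw [dag_z, dag_X]
  · intro u v hu hv; rw [map_add, map_add, hu, hv]
  · intro u v hu hv; rw [dag_mul, dag_mul, hu, hv]

noncomputable def dagEquiv (ha0 : a ≠ 0) : Usl2 F q ≃ₗ[F] Usl2 F q :=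
  { dag F q a ha0 with
    invFun := dag F q a ha0
    left_inv := dag_dag F q a ha0
    right_inv := dag_dag F q a ha0 }

lemma dagEquiv_apply (ha0 : a ≠ 0) (u : Usl2 F q) :
    dagEquiv F q a ha0 u = dag F q a ha0 u := rfl

lemma d_determined (hq0 : q ≠ 0) (hq4 : q ^ 4 ≠ 1) (ha0 : a ≠ 0)
    (d : Usl2 F q ≃ₗ[F] Usl2 F q)
    (hanti : ∀ u v : Usl2 F q, d (u * v) = d v * d u)
    (hA : d (uA F q a) = uA F q a) (hy : d (uy F q) = uy F q)
    (hy' : d (uy' F q) = uy' F q) :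
    d (ux F q) = uZ F q a ∧ d (uz F q) = uX F q a := by
  have d1 : d (1 : Usl2 F q) = 1 := by
    have h := congrArg d (ryy' F q)
    rw [hanti, hy, hy', ry'y] at h
    exact h.symm
  have H1 : q • (uy F q * d (ux F q)) - q⁻¹ • (d (ux F q) * uy F q)
      = (q - q⁻¹) • (1 : Usl2 F q) := by
    have h := congrArg d (rxy F q)
    rw [map_sub, map_smul, map_smul, map_smul, hanti, hanti, hy, d1] at h
    exact h
  have H2 : q • (d (uz F q) * uy F q) - q⁻¹ • (uy F q * d (uz F q))
      = (q - q⁻¹) • (1 : Usl2 F q) := by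
    have h := congrArg d (ryz F q)
    rw [map_sub, map_smul, map_smul, map_smul, hanti, hanti, hy, d1] at h
    exact h
  have E1 : q • (uy F q * (d (ux F q) - uZ F q a))
      - q⁻¹ • ((d (ux F q) - uZ F q a) * uy F q) = 0 := by
    simp only [mul_sub, sub_mul]
    linear_combination (norm := module) H1 - rD1 F q a
  have E2 : q • ((d (uz F q) - uX F q a) * uy F q)
      - q⁻¹ • (uy F q * (d (uz F q) - uX F q a)) = 0 := by
    simp only [mul_sub, sub_mul]
    linear_combination (norm := module) H2 - rD2 F q a
  have hval : a⁻¹ • (d (ux F q) - uZ F q a) + a • (d (uz F q) - uX F q a) = 0 := by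
    have h : a⁻¹ • d (ux F q) + a • d (uz F q) = a • uX F q a + a⁻¹ • uZ F q a := by
      rw [← map_smul, ← map_smul, ← map_add,
        show a⁻¹ • ux F q + a • uz F q = uA F q a from rfl, hA, rAB F q a ha0]
    simp only [smul_sub]
    linear_combination (norm := module) h
  have hveq : (a⁻¹ * a⁻¹) • (d (ux F q) - uZ F q a) + (d (uz F q) - uX F q a) = 0 := by
    have h := congrArg (a⁻¹ • ·) hval
    simp only [smul_add, smul_smul, smul_zero] at h
    rw [inv_mul_cancel₀ ha0, one_smul] at h
    exact h
  have E2' : q • ((d (ux F q) - uZ F q a) * uy F q)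
      - q⁻¹ • (uy F q * (d (ux F q) - uZ F q a)) = 0 := by
    have m1 := congrArg (· * uy F q) hveq
    have m2 := congrArg (uy F q * ·) hveq
    simp only [add_mul, mul_add, smul_mul_assoc, mul_smul_comm, zero_mul, mul_zero] at m1 m2
    have h : (a⁻¹ * a⁻¹) • (q • ((d (ux F q) - uZ F q a) * uy F q)
        - q⁻¹ • (uy F q * (d (ux F q) - uZ F q a))) = 0 := by
      linear_combination (norm := module) q • m1 - q⁻¹ • m2 - E2
    rcases smul_eq_zero.mp h with h | h
    · exact absurd h (by simp [ha0])
    · exact h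
  have ht : (d (ux F q) - uZ F q a) * uy F q
      = (q * q) • (uy F q * (d (ux F q) - uZ F q a)) := by
    have h := congrArg (q • ·) E1
    simp only [smul_sub, smul_smul, smul_zero] at h
    rw [mul_inv_cancel₀ hq0, one_smul] at h
    exact (sub_eq_zero.mp h).symm
  have hs : (q * (q * q) - q⁻¹) • (uy F q * (d (ux F q) - uZ F q a)) = 0 := by
    rw [ht, smul_smul, ← sub_smul] at E2'
    exact E2'
  have hcoef : q * (q * q) - q⁻¹ ≠ 0 := by
    intro h
    apply hq4
    have h' : q * (q * q) = q⁻¹ := sub_eq_zero.mp h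
    have h2 := congrArg (q * ·) h'
    simp only [mul_inv_cancel₀ hq0] at h2
    calc q ^ 4 = q * (q * (q * q)) := by ring
      _ = 1 := h2
  have hu0 : d (ux F q) - uZ F q a = 0 := by
    have h0 : uy F q * (d (ux F q) - uZ F q a) = 0 :=
      (smul_eq_zero.mp hs).resolve_left hcoef
    have h1 : uy' F q * (uy F q * (d (ux F q) - uZ F q a)) = 0 := by
      rw [h0, mul_zero]
    rwa [cy'y] at h1
  rw [hu0, smul_zero, zero_add] at hveq
  exact ⟨sub_eq_zero.mp hu0, sub_eq_zero.mp hveq⟩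

lemma d_eq_dag (hq0 : q ≠ 0) (hq4 : q ^ 4 ≠ 1) (ha0 : a ≠ 0)
    (d : Usl2 F q ≃ₗ[F] Usl2 F q)
    (hanti : ∀ u v : Usl2 F q, d (u * v) = d v * d u)
    (hA : d (uA F q a) = uA F q a) (hy : d (uy F q) = uy F q)
    (hy' : d (uy' F q) = uy' F q) :
    ∀ u, d u = dag F q a ha0 u := by
  obtain ⟨hx, hz⟩ := d_determined F q a hq0 hq4 ha0 d hanti hA hy hy'
  have d1 : d (1 : Usl2 F q) = 1 := by
    have h := congrArg d (ryy' F q)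
    rw [hanti, hy, hy', ry'y] at h
    exact h.symm
  refine usl2_induction F q ?_ ?_ ?_ ?_ ?_ ?_ ?_
  · intro c
    rw [dag_algebraMap, Algebra.algebraMap_eq_smul_one, map_smul, d1]
  · rw [hx, dag_x]
  · rw [hy, dag_y]
  · rw [hy', dag_y']
  · rw [hz, dag_z]
  · intro u v hu hv; rw [map_add, map_add, hu, hv]
  · intro u v hu hv; rw [hanti, dag_mul, hu, hv]

end Lemmas

/-- **Lemma 8.4.** There exists a unique antiautomorphism `†` of `U_q(sl2)`
(an `𝔽`-linear bijection with `†(uv) = †(v)†(u)`) that fixes each of `A`, `y`, `y⁻¹`;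
it sends `x ↦ Z`, `y^{±1} ↦ y^{±1}`, `z ↦ X`, and satisfies `†² = 1`. -/
theorem statement17 (F : Type*) [Field F] (q : F) (hq0 : q ≠ 0) (hq4 : q ^ 4 ≠ 1)
    (a : F) (ha0 : a ≠ 0) (ha2 : a ^ 2 ≠ 1) :
    (∃! d : Usl2 F q ≃ₗ[F] Usl2 F q,
      (∀ u v : Usl2 F q, d (u * v) = d v * d u) ∧
      d (uA F q a) = uA F q a ∧ d (uy F q) = uy F q ∧ d (uy' F q) = uy' F q) ∧
    (∀ d : Usl2 F q ≃ₗ[F] Usl2 F q,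
      ((∀ u v : Usl2 F q, d (u * v) = d v * d u) ∧
        d (uA F q a) = uA F q a ∧ d (uy F q) = uy F q ∧ d (uy' F q) = uy' F q) →
      d (ux F q) = uZ F q a ∧ d (uz F q) = uX F q a ∧
        ∀ u : Usl2 F q, d (d u) = u) := by
  constructor
  · refine ⟨dagEquiv F q a ha0, ⟨fun u v => dag_mul F q a ha0 u v,
      dag_A F q a ha0, dag_y F q a ha0, dag_y' F q a ha0⟩, ?_⟩
    rintro d ⟨hanti, hA, hy, hy'⟩
    exact LinearEquiv.ext (d_eq_dag F q a hq0 hq4 ha0 d hanti hA hy hy')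
  · rintro d ⟨hanti, hA, hy, hy'⟩
    obtain ⟨hx, hz⟩ := d_determined F q a hq0 hq4 ha0 d hanti hA hy hy'
    refine ⟨hx, hz, fun u => ?_⟩
    have heq := d_eq_dag F q a hq0 hq4 ha0 d hanti hA hy hy'
    rw [heq u, heq (dag F q a ha0 u), dag_dag]


end Paper
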